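/- Let A ∈ ℝ^{n×n} have spectral radius strictly greater than one (i.e., some complex eigenvalue λ of A satisfies |λ| > 1), and let R ≥ 0. Then the set {x ∈ ℝ^n : ‖A^k x‖ ≤ R for all integers k ≥ 0} (with ‖·‖ the Euclidean norm) has Lebesgue measure zero in ℝ^n. -/

import Mathlib

open Matrix MeasureTheory

section aux
attribute [local instance] Matrix.frobeniusSeminormedAddCommGroup Matrix.frobeniusNormedAddCommGroup Matrix.frobeniusNormedRing Matrix.frobeniusNormedSpace Matrix.frobeniusNormedAlgebra

set_option maxHeartbeats 2000000 in
/-- If all entries of all powers of a real matrix are uniformly bounded, then no complex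
eigenvalue has modulus greater than one. -/
lemma stmt_8_aux (n : ℕ) (A : Matrix (Fin n) (Fin n) ℝ) (C : ℝ) (hC0 : 0 ≤ C)
    (hentry : ∀ (k : ℕ) (i j : Fin n), |(A ^ k) i j| ≤ C)
    (μ : ℂ) (hμ : μ ∈ spectrum ℂ (A.map Complex.ofReal)) : ¬ (1 < ‖μ‖) := by
  intro hμ1
  have hpow : ∀ k : ℕ, (A.map Complex.ofReal) ^ k = (A ^ k).map Complex.ofReal := by
    intro k
    have := map_pow (Complex.ofRealHom.mapMatrix) A k
    exact this.symm
  have hnormM : ∀ k : ℕ, ‖(A.map Complex.ofReal) ^ k‖ ≤ n * C := by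
    intro k
    rw [hpow k, Matrix.frobenius_norm_def]
    have hterm : ∀ i j, ‖((A ^ k).map Complex.ofReal) i j‖ ≤ C := by
      intro i j
      simpa [Matrix.map_apply, Complex.norm_real, Real.norm_eq_abs] using hentry k i j
    have h1 : ∑ i, ∑ j : Fin n, ‖((A ^ k).map Complex.ofReal) i j‖ ^ (2:ℝ)
        ≤ (n : ℝ) * ((n : ℝ) * C ^ (2:ℝ)) := by
      calc ∑ i, ∑ j : Fin n, ‖((A ^ k).map Complex.ofReal) i j‖ ^ (2:ℝ)
          ≤ ∑ _i : Fin n, ∑ _j : Fin n, C ^ (2:ℝ) := by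
            apply Finset.sum_le_sum; intro i _; apply Finset.sum_le_sum; intro j _
            exact Real.rpow_le_rpow (norm_nonneg _) (hterm i j) (by norm_num)
        _ = (n : ℝ) * ((n : ℝ) * C ^ (2:ℝ)) := by simp [mul_assoc]
    calc (∑ i, ∑ j : Fin n, ‖((A ^ k).map Complex.ofReal) i j‖ ^ (2:ℝ)) ^ (1/2:ℝ)
        ≤ ((n:ℝ) * ((n:ℝ) * C ^ (2:ℝ))) ^ (1/2:ℝ) :=
          Real.rpow_le_rpow (by positivity) h1 (by norm_num)
      _ = n * C := by
          rw [show (n:ℝ) * ((n:ℝ) * C ^ (2:ℝ)) = ((n:ℝ)*C)^(2:ℝ) by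
            rw [Real.mul_rpow (by positivity) hC0, Real.rpow_two, Real.rpow_two]; ring]
          rw [← Real.rpow_mul (by positivity)]; norm_num
  have hspec : ∀ k : ℕ, ‖μ‖ ^ k ≤ n * C * ‖(1 : Matrix (Fin n) (Fin n) ℂ)‖ := by
    intro k
    have h2 : μ ^ k ∈ spectrum ℂ ((A.map Complex.ofReal) ^ k) :=
      spectrum.pow_image_subset (A.map Complex.ofReal) k ⟨μ, hμ, rfl⟩
    have h3 := spectrum.norm_le_norm_mul_of_mem h2
    rw [norm_pow] at h3
    calc ‖μ‖ ^ k ≤ ‖(A.map Complex.ofReal) ^ k‖ * ‖(1 : Matrix (Fin n) (Fin n) ℂ)‖ := h3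
      _ ≤ n * C * ‖(1 : Matrix (Fin n) (Fin n) ℂ)‖ :=
          mul_le_mul_of_nonneg_right (hnormM k) (norm_nonneg _)
  obtain ⟨k, hk⟩ := pow_unbounded_of_one_lt ((n:ℝ) * C * ‖(1 : Matrix (Fin n) (Fin n) ℂ)‖) hμ1
  exact absurd (hspec k) (not_le.mpr hk)

end aux

/-- If a real matrix `A` has some complex eigenvalue of modulus greater than one,
then the set of initial conditions whose entire forward orbit stays in the
(Euclidean) ball of radius `R` has Lebesgue measure zero. -/
theorem stmt_8 (n : ℕ) (A : Matrix (Fin n) (Fin n) ℝ)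
    (hA : ∃ μ ∈ spectrum ℂ (A.map Complex.ofReal), 1 < ‖μ‖)
    (R : ℝ) (hR : 0 ≤ R) :
    volume {x : Fin n → ℝ |
      ∀ k : ℕ, Real.sqrt (∑ i, (((A ^ k) *ᵥ x) i) ^ 2) ≤ R} = 0 := by
  obtain ⟨μ, hμ, hμ1⟩ := hA
  set S : Set (Fin n → ℝ) :=
    {x | ∀ k : ℕ, Real.sqrt (∑ i, (((A ^ k) *ᵥ x) i) ^ 2) ≤ R} with hS
  have hnorm : ∀ (k : ℕ) (x : Fin n → ℝ),
      Real.sqrt (∑ i, (((A ^ k) *ᵥ x) i) ^ 2)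
        = ‖(WithLp.equiv 2 (Fin n → ℝ)).symm ((A ^ k) *ᵥ x)‖ := by
    intro k x
    rw [EuclideanSpace.norm_eq]
    simp [Real.norm_eq_abs, sq_abs]
  have hSrw : S = ⋂ k : ℕ,
      ((WithLp.linearEquiv 2 ℝ (Fin n → ℝ)).symm.toLinearMap.comp (A ^ k).mulVecLin) ⁻¹'
        Metric.closedBall 0 R := by
    ext x
    simp only [hS, Set.mem_setOf_eq, Set.mem_iInter, Set.mem_preimage,
      Metric.mem_closedBall, dist_zero_right]
    constructor
    · intro h k
      have := h k; rw [hnorm k x] at this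
      simpa [LinearMap.comp_apply, Matrix.mulVecLin_apply] using this
    · intro h k
      have := h k
      rw [hnorm k x]
      simpa [LinearMap.comp_apply, Matrix.mulVecLin_apply] using this
  have hconv : Convex ℝ S := by
    rw [hSrw]
    exact convex_iInter fun k =>
      (convex_closedBall (0 : EuclideanSpace ℝ (Fin n)) R).linear_preimage _
  have hclosed : IsClosed S := by
    rw [hSrw]
    exact isClosed_iInter fun k =>
      (Metric.isClosed_closedBall.preimage (LinearMap.continuous_of_finiteDimensional _))
  by_cases hint : (interior S).Nonempty
  · exfalso
    obtain ⟨x0, hx0⟩ := hint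
    obtain ⟨ε, hε, hball⟩ := Metric.isOpen_iff.mp isOpen_interior x0 hx0
    have hballS : Metric.ball x0 ε ⊆ S := hball.trans interior_subset
    have key : ∀ x ∈ S, ∀ (k : ℕ) (i : Fin n), |((A ^ k) *ᵥ x) i| ≤ R := by
      intro x hx k i
      have h1 : (((A ^ k) *ᵥ x) i) ^ 2 ≤ ∑ i', (((A ^ k) *ᵥ x) i') ^ 2 :=
        Finset.single_le_sum (f := fun i' => (((A ^ k) *ᵥ x) i') ^ 2)
          (fun i' _ => sq_nonneg _) (Finset.mem_univ i)
      calc |((A ^ k) *ᵥ x) i| = Real.sqrt ((((A ^ k) *ᵥ x) i) ^ 2) := (Real.sqrt_sq_eq_abs _).symm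
        _ ≤ Real.sqrt (∑ i', (((A ^ k) *ᵥ x) i') ^ 2) := Real.sqrt_le_sqrt h1
        _ ≤ R := hx k
    have hC0 : (0:ℝ) ≤ 4 * R / ε := by positivity
    have hentry : ∀ (k : ℕ) (i j : Fin n), |(A ^ k) i j| ≤ 4 * R / ε := by
      intro k i j
      have hyS : x0 + (ε/2) • (Pi.single j 1 : Fin n → ℝ) ∈ S := by
        apply hballS
        simp only [Metric.mem_ball, dist_eq_norm, add_sub_cancel_left]
        have : ‖(ε/2) • (Pi.single j 1 : Fin n → ℝ)‖ = ε/2 := by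
          rw [norm_smul, Pi.norm_single, norm_one, mul_one, Real.norm_eq_abs,
            abs_of_pos (by linarith)]
        rw [this]; linarith
      have hx0S : x0 ∈ S := hballS (Metric.mem_ball_self hε)
      have hval : ((A ^ k) *ᵥ (x0 + (ε/2) • (Pi.single j 1 : Fin n → ℝ))) i
          - ((A ^ k) *ᵥ x0) i = (ε/2) * (A ^ k) i j := by
        rw [Matrix.mulVec_add, Matrix.mulVec_smul]
        simp [Matrix.mulVec_single]
      have h2 : |(ε/2) * (A ^ k) i j| ≤ 2 * R := by
        rw [← hval]
        calc |((A ^ k) *ᵥ (x0 + (ε/2) • (Pi.single j 1 : Fin n → ℝ))) i - ((A ^ k) *ᵥ x0) i|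
            ≤ |((A ^ k) *ᵥ (x0 + (ε/2) • (Pi.single j 1 : Fin n → ℝ))) i|
              + |((A ^ k) *ᵥ x0) i| := abs_sub _ _
          _ ≤ R + R := add_le_add (key _ hyS k i) (key _ hx0S k i)
          _ = 2 * R := by ring
      rw [abs_mul, abs_of_pos (by linarith : (0:ℝ) < ε/2)] at h2
      rw [le_div_iff₀ hε]
      nlinarith [abs_nonneg ((A ^ k) i j)]
    exact stmt_8_aux n A (4 * R / ε) hC0 hentry μ hμ hμ1
  · have hfr : frontier S = S := by
      rw [frontier, hclosed.closure_eq, Set.not_nonempty_iff_eq_empty.mp hint, Set.diff_empty]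
    rw [← hfr]
    exact hconv.addHaar_frontier volume
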